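/- Let P be a finite bounded graded poset of rank r ≥ 2. Then H_P(t) = (1+t)·H_{τ(P)}(t) - t·H_{τ²(P)}(t) + t·∑_{ρ(x) = r-1} H_{τ([0̂,x])}(t), where the sum ranges over coatoms x of P. -/

import Mathlib

open Polynomial Finset

attribute [local instance] Classical.propDecidable

variable {P : Type*} [PartialOrder P] [Fintype P]

noncomputable local instance : LocallyFiniteOrder P := Fintype.toLocallyFiniteOrder

noncomputable def posetMu (S : Finset P) (x y : P) : ℤ :=
  if x = y then 1
  else -∑ z ∈ (S ∩ Finset.Ico x y).attach, posetMu S x z.1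
termination_by (Finset.Icc x y).card
decreasing_by
  · have hz := (Finset.mem_inter.mp z.2).2
    rw [Finset.mem_Ico] at hz
    refine Finset.card_lt_card ⟨Finset.Icc_subset_Icc_right hz.2.le, fun hsub => ?_⟩
    have := hsub (Finset.mem_Icc.mpr ⟨hz.1.trans hz.2.le, le_refl y⟩)
    exact absurd (Finset.mem_Icc.mp this).2 (fun h => lt_irrefl _ (lt_of_lt_of_le hz.2 h))

noncomputable def posetChi (S : Finset P) (ρ : P → ℕ) (x y : P) : Polynomial ℝ :=
  ∑ z ∈ S ∩ Finset.Icc x y, C (posetMu S x z : ℝ) * X ^ (ρ y - ρ z)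

noncomputable def posetChibar (S : Finset P) (ρ : P → ℕ) (x y : P) : Polynomial ℝ :=
  if x = y then -1 else posetChi S ρ x y /ₘ (X - C 1)

noncomputable def posetChow (S : Finset P) (ρ : P → ℕ) (x y : P) : Polynomial ℝ :=
  if x = y then 1
  else ∑ z ∈ (S ∩ Finset.Ioc x y).attach, posetChibar S ρ x z.1 * posetChow S ρ z.1 y
termination_by (Finset.Icc x y).card
decreasing_by
  · have hz := (Finset.mem_inter.mp z.2).2
    rw [Finset.mem_Ioc] at hz
    refine Finset.card_lt_card ⟨Finset.Icc_subset_Icc_left hz.1.le, fun hsub => ?_⟩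
    have := hsub (Finset.mem_Icc.mpr ⟨le_refl x, hz.1.le.trans hz.2⟩)
    exact absurd (Finset.mem_Icc.mp this).1 (fun h => lt_irrefl _ (lt_of_lt_of_le hz.1 h))

noncomputable def posetG (S : Finset P) (ρ : P → ℕ) (x y : P) : Polynomial ℝ :=
  ∑ z ∈ S ∩ Finset.Icc x y, X ^ (ρ z - ρ x) * posetChow S ρ z y

def IsRankFn [BoundedOrder P] (ρ : P → ℕ) : Prop :=
  ρ ⊥ = 0 ∧ ∀ x y : P, x ⋖ y → ρ y = ρ x + 1

set_option linter.unusedSectionVars false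

section Aux

lemma card_Icc_lt_of_mem_Ico {x y z : P} (hz : z ∈ Finset.Ico x y) :
    (Finset.Icc x z).card < (Finset.Icc x y).card := by
  rw [Finset.mem_Ico] at hz
  refine Finset.card_lt_card ⟨Finset.Icc_subset_Icc_right hz.2.le, fun hsub => ?_⟩
  have := hsub (Finset.mem_Icc.mpr ⟨hz.1.trans hz.2.le, le_refl y⟩)
  exact absurd (Finset.mem_Icc.mp this).2 hz.2.not_ge

lemma card_Icc_lt_of_mem_Ioc {x y z : P} (hz : z ∈ Finset.Ioc x y) :
    (Finset.Icc z y).card < (Finset.Icc x y).card := by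
  rw [Finset.mem_Ioc] at hz
  refine Finset.card_lt_card ⟨Finset.Icc_subset_Icc_left hz.1.le, fun hsub => ?_⟩
  have := hsub (Finset.mem_Icc.mpr ⟨le_refl x, hz.1.le.trans hz.2⟩)
  exact absurd (Finset.mem_Icc.mp this).1 hz.1.not_ge

lemma posetMu_self (S : Finset P) (x : P) : posetMu S x x = 1 := by
  rw [posetMu]; simp

lemma posetMu_of_ne (S : Finset P) {x y : P} (h : x ≠ y) :
    posetMu S x y = -∑ z ∈ S ∩ Finset.Ico x y, posetMu S x z := by
  rw [posetMu]; rw [if_neg h, ← Finset.sum_attach (S ∩ Finset.Ico x y) (fun z => posetMu S x z)]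

lemma posetChow_self (S : Finset P) (ρ : P → ℕ) (x : P) : posetChow S ρ x x = 1 := by
  rw [posetChow]; simp

lemma posetChow_of_ne (S : Finset P) (ρ : P → ℕ) {x y : P} (h : x ≠ y) :
    posetChow S ρ x y = ∑ z ∈ S ∩ Finset.Ioc x y, posetChibar S ρ x z * posetChow S ρ z y := by
  rw [posetChow]
  rw [if_neg h, ← Finset.sum_attach (S ∩ Finset.Ioc x y)
    (fun z => posetChibar S ρ x z * posetChow S ρ z y)]

-- μ depends only on S ∩ Ico x y
lemma posetMu_congr (S T : Finset P) (x y : P)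
    (h : S ∩ Finset.Ico x y = T ∩ Finset.Ico x y) : posetMu S x y = posetMu T x y := by
  rcases eq_or_ne x y with rfl | hxy
  · rw [posetMu_self, posetMu_self]
  · rw [posetMu_of_ne S hxy, posetMu_of_ne T hxy, h]
    refine congrArg _ (Finset.sum_congr rfl fun z hz => ?_)
    have hz' := (Finset.mem_inter.mp hz).2
    refine posetMu_congr S T x z ?_
    · have hsub : Finset.Ico x z ⊆ Finset.Ico x y := by
        have := (Finset.mem_Ico.mp hz')
        exact Finset.Ico_subset_Ico le_rfl this.2.le
      have hk : Finset.Ico x y ∩ Finset.Ico x z = Finset.Ico x z :=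
        Finset.inter_eq_right.mpr hsub
      calc S ∩ Finset.Ico x z = (S ∩ Finset.Ico x y) ∩ Finset.Ico x z := by
            rw [Finset.inter_assoc, hk]
        _ = (T ∩ Finset.Ico x y) ∩ Finset.Ico x z := by rw [h]
        _ = T ∩ Finset.Ico x z := by rw [Finset.inter_assoc, hk]
termination_by (Finset.Icc x y).card
decreasing_by
  exact card_Icc_lt_of_mem_Ico (Finset.mem_inter.mp hz).2

-- if x ∉ S then μ_S(x, ·) vanishes off the diagonal
lemma posetMu_eq_zero_of_not_mem (S : Finset P) (x : P) (hx : x ∉ S) :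
    ∀ y : P, x ≠ y → posetMu S x y = 0 := by
  intro y hxy
  rw [posetMu_of_ne S hxy]
  rw [neg_eq_zero]
  refine Finset.sum_eq_zero fun z hz => ?_
  have hz1 := (Finset.mem_inter.mp hz).1
  have hxz : x ≠ z := fun h => hx (h ▸ hz1)
  exact posetMu_eq_zero_of_not_mem S x hx z hxz
termination_by y => (Finset.Icc x y).card
decreasing_by
  exact card_Icc_lt_of_mem_Ico (Finset.mem_inter.mp hz).2

-- row sums of μ
lemma posetMu_row_sum (S : Finset P) {x y : P} (hy : y ∈ S) (hxy : x ≤ y) :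
    ∑ z ∈ S ∩ Finset.Icc x y, posetMu S x z = if x = y then 1 else 0 := by
  rcases eq_or_ne x y with rfl | hne
  · rw [if_pos rfl]
    have : S ∩ Finset.Icc x x = {x} := by
      ext w
      simp only [Finset.mem_inter, Finset.Icc_self, Finset.mem_singleton]
      constructor
      · rintro ⟨_, h⟩; exact h
      · rintro rfl; exact ⟨hy, rfl⟩
    rw [this, Finset.sum_singleton, posetMu_self]
  · rw [if_neg hne]
    have hsplit : S ∩ Finset.Icc x y = insert y (S ∩ Finset.Ico x y) := by
      ext w
      simp only [Finset.mem_inter, Finset.mem_insert, Finset.mem_Icc, Finset.mem_Ico]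
      constructor
      · rintro ⟨hw, h1, h2⟩
        rcases eq_or_ne w y with rfl | hwy
        · exact Or.inl rfl
        · exact Or.inr ⟨hw, h1, lt_of_le_of_ne h2 hwy⟩
      · rintro (rfl | ⟨hw, h1, h2⟩)
        · exact ⟨hy, hxy, le_rfl⟩
        · exact ⟨hw, h1, h2.le⟩
    have hnotmem : y ∉ S ∩ Finset.Ico x y := by
      simp [Finset.mem_Ico]
    rw [hsplit, Finset.sum_insert hnotmem, posetMu_of_ne S hne]
    ring

lemma inter_Icc_insert (S : Finset P) {x y : P} (hy : y ∈ S) (hxy : x ≤ y) :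
    S ∩ Finset.Icc x y = insert y (S ∩ Finset.Ico x y) := by
  ext w
  simp only [Finset.mem_inter, Finset.mem_insert, Finset.mem_Icc, Finset.mem_Ico]
  constructor
  · rintro ⟨hw, h1, h2⟩
    rcases eq_or_ne w y with rfl | hwy
    · exact Or.inl rfl
    · exact Or.inr ⟨hw, h1, lt_of_le_of_ne h2 hwy⟩
  · rintro (rfl | ⟨hw, h1, h2⟩)
    · exact ⟨hy, hxy, le_rfl⟩
    · exact ⟨hw, h1, h2.le⟩

lemma not_mem_inter_Ico (S : Finset P) (x y : P) : y ∉ S ∩ Finset.Ico x y := by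
  simp [Finset.mem_Ico]

lemma inter_Icc_left_filter (S : Finset P) {x y z : P} (hz : x ≤ z) :
    S ∩ Finset.Icc z y = (S ∩ Finset.Icc x y).filter (fun w => z ≤ w) := by
  ext w
  simp only [Finset.mem_inter, Finset.mem_filter, Finset.mem_Icc]
  constructor
  · rintro ⟨hw, h1, h2⟩; exact ⟨⟨hw, hz.trans h1, h2⟩, h1⟩
  · rintro ⟨⟨hw, _, h2⟩, h3⟩; exact ⟨hw, h3, h2⟩

lemma inter_Icc_right_filter (S : Finset P) {x y w : P} (hw : w ≤ y) :
    S ∩ Finset.Icc x w = (S ∩ Finset.Icc x y).filter (fun z => z ≤ w) := by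
  ext u
  simp only [Finset.mem_inter, Finset.mem_filter, Finset.mem_Icc]
  constructor
  · rintro ⟨hu, h1, h2⟩; exact ⟨⟨hu, h1, h2.trans hw⟩, h2⟩
  · rintro ⟨⟨hu, h1, _⟩, h3⟩; exact ⟨hu, h1, h3⟩

lemma sum_interval_swap {M : Type*} [AddCommMonoid M] (S : Finset P) (x y : P)
    (f : P → P → M) :
    ∑ z ∈ S ∩ Finset.Icc x y, ∑ w ∈ S ∩ Finset.Icc z y, f z w
      = ∑ w ∈ S ∩ Finset.Icc x y, ∑ z ∈ S ∩ Finset.Icc x w, f z w := by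
  have h1 : ∀ z ∈ S ∩ Finset.Icc x y,
      ∑ w ∈ S ∩ Finset.Icc z y, f z w
        = ∑ w ∈ S ∩ Finset.Icc x y, if z ≤ w then f z w else 0 := by
    intro z hz
    rw [inter_Icc_left_filter S (Finset.mem_Icc.mp (Finset.mem_inter.mp hz).2).1,
      Finset.sum_filter]
  have h2 : ∀ w ∈ S ∩ Finset.Icc x y,
      ∑ z ∈ S ∩ Finset.Icc x w, f z w
        = ∑ z ∈ S ∩ Finset.Icc x y, if z ≤ w then f z w else 0 := by
    intro w hw
    rw [inter_Icc_right_filter S (Finset.mem_Icc.mp (Finset.mem_inter.mp hw).2).2,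
      Finset.sum_filter]
  rw [Finset.sum_congr rfl h1, Finset.sum_congr rfl h2, Finset.sum_comm]

lemma posetMu_col_sum (S : Finset P) {x y : P} (hx : x ∈ S) (hy : y ∈ S) (hxy : x ≤ y) :
    ∑ z ∈ S ∩ Finset.Icc x y, posetMu S z y = if x = y then 1 else 0 := by
  rcases eq_or_ne x y with rfl | hne
  · rw [if_pos rfl, inter_Icc_insert S hy le_rfl, Finset.sum_insert (not_mem_inter_Ico S x x)]
    have : S ∩ Finset.Ico x x = ∅ := by simp
    rw [this, Finset.sum_empty, posetMu_self, add_zero]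
  · rw [if_neg hne]
    have swap := sum_interval_swap S x y (fun w z => posetMu S w z)
    have lhs1 : ∑ w ∈ S ∩ Finset.Icc x y, ∑ z ∈ S ∩ Finset.Icc w y, posetMu S w z
        = (1 : ℤ) := by
      rw [Finset.sum_congr rfl (fun w hw => posetMu_row_sum S hy
        (Finset.mem_Icc.mp (Finset.mem_inter.mp hw).2).2)]
      rw [Finset.sum_ite_eq' (S ∩ Finset.Icc x y) y (fun _ => (1:ℤ))]
      rw [if_pos (Finset.mem_inter.mpr ⟨hy, Finset.mem_Icc.mpr ⟨hxy, le_rfl⟩⟩)]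
    rw [swap] at lhs1
    rw [inter_Icc_insert S hy hxy, Finset.sum_insert (not_mem_inter_Ico S x y)] at lhs1
    have hmain : ∑ z ∈ S ∩ Finset.Ico x y, ∑ w ∈ S ∩ Finset.Icc x z, posetMu S w z
        = (1 : ℤ) := by
      have : ∀ z ∈ S ∩ Finset.Ico x y,
          ∑ w ∈ S ∩ Finset.Icc x z, posetMu S w z = if z = x then 1 else 0 := by
        intro z hz
        have hz1 := (Finset.mem_inter.mp hz).1
        have hz2 := Finset.mem_Ico.mp (Finset.mem_inter.mp hz).2
        rw [posetMu_col_sum S hx hz1 hz2.1]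
        simp only [eq_comm]
      rw [Finset.sum_congr rfl this,
        Finset.sum_ite_eq' (S ∩ Finset.Ico x y) x (fun _ => (1:ℤ)),
        if_pos (Finset.mem_inter.mpr ⟨hx, Finset.mem_Ico.mpr ⟨le_rfl, lt_of_le_of_ne hxy hne⟩⟩)]
    rw [hmain] at lhs1
    omega
termination_by (Finset.Icc x y).card
decreasing_by
  exact card_Icc_lt_of_mem_Ico (Finset.mem_inter.mp hz).2

lemma inter_sub_congr {S T : Finset P} {x y a b : P}
    (h : S ∩ Finset.Icc x y = T ∩ Finset.Icc x y) (h1 : x ≤ a) (h2 : b ≤ y) :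
    S ∩ Finset.Icc a b = T ∩ Finset.Icc a b := by
  have hsub : Finset.Icc a b ⊆ Finset.Icc x y := Finset.Icc_subset_Icc h1 h2
  have hk : Finset.Icc x y ∩ Finset.Icc a b = Finset.Icc a b := Finset.inter_eq_right.mpr hsub
  calc S ∩ Finset.Icc a b = (S ∩ Finset.Icc x y) ∩ Finset.Icc a b := by
        rw [Finset.inter_assoc, hk]
    _ = (T ∩ Finset.Icc x y) ∩ Finset.Icc a b := by rw [h]
    _ = T ∩ Finset.Icc a b := by rw [Finset.inter_assoc, hk]

lemma inter_Ico_eq_filter (S : Finset P) (x y : P) :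
    S ∩ Finset.Ico x y = (S ∩ Finset.Icc x y).filter (fun w => w ≠ y) := by
  ext w
  simp only [Finset.mem_inter, Finset.mem_filter, Finset.mem_Icc, Finset.mem_Ico]
  constructor
  · rintro ⟨hw, h1, h2⟩; exact ⟨⟨hw, h1, h2.le⟩, h2.ne⟩
  · rintro ⟨⟨hw, h1, h2⟩, h3⟩; exact ⟨hw, h1, lt_of_le_of_ne h2 h3⟩

lemma inter_Ioc_eq_filter (S : Finset P) (x y : P) :
    S ∩ Finset.Ioc x y = (S ∩ Finset.Icc x y).filter (fun w => w ≠ x) := by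
  ext w
  simp only [Finset.mem_inter, Finset.mem_filter, Finset.mem_Icc, Finset.mem_Ioc]
  constructor
  · rintro ⟨hw, h1, h2⟩; exact ⟨⟨hw, h1.le, h2⟩, fun hh => (hh ▸ h1).false⟩
  · rintro ⟨⟨hw, h1, h2⟩, h3⟩; exact ⟨hw, lt_of_le_of_ne h1 (Ne.symm h3), h2⟩

lemma posetChi_congr {S T : Finset P} {σ σ' : P → ℕ} {x y : P}
    (h : S ∩ Finset.Icc x y = T ∩ Finset.Icc x y)
    (hσ : ∀ z ∈ S ∩ Finset.Icc x y, σ z = σ' z) (hσy : σ y = σ' y) :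
    posetChi S σ x y = posetChi T σ' x y := by
  unfold posetChi
  rw [← h]
  refine Finset.sum_congr rfl fun z hz => ?_
  have hmu : posetMu S x z = posetMu T x z := by
    refine posetMu_congr S T x z ?_
    rw [inter_Ico_eq_filter, inter_Ico_eq_filter,
      inter_sub_congr h le_rfl (Finset.mem_Icc.mp (Finset.mem_inter.mp hz).2).2]
  rw [hmu, hσ z hz, hσy]

lemma posetChi_eval_one {S : Finset P} {σ : P → ℕ} {x y : P}
    (hy : y ∈ S) (hxy : x ≤ y) (hne : x ≠ y) :
    (posetChi S σ x y).eval 1 = 0 := by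
  unfold posetChi
  rw [Polynomial.eval_finset_sum]
  simp only [Polynomial.eval_mul, Polynomial.eval_C, Polynomial.eval_pow, Polynomial.eval_X,
    one_pow, mul_one]
  have := posetMu_row_sum S hy hxy
  rw [if_neg hne] at this
  have : ((∑ z ∈ S ∩ Finset.Icc x y, posetMu S x z : ℤ) : ℝ) = 0 := by rw [this]; norm_num
  rw [← this, Int.cast_sum]

lemma posetChibar_mul {S : Finset P} {σ : P → ℕ} {x y : P}
    (hy : y ∈ S) (hxy : x ≤ y) (hne : x ≠ y) :
    (X - C 1) * posetChibar S σ x y = posetChi S σ x y := by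
  unfold posetChibar
  rw [if_neg hne]
  have hdvd : (X - C (1:ℝ)) ∣ posetChi S σ x y := by
    rw [Polynomial.dvd_iff_isRoot]
    exact posetChi_eval_one hy hxy hne
  have hmod : posetChi S σ x y %ₘ (X - C 1) = 0 :=
    (Polynomial.modByMonic_eq_zero_iff_dvd (Polynomial.monic_X_sub_C 1)).mpr hdvd
  have := Polynomial.modByMonic_add_div (posetChi S σ x y) (X - C (1:ℝ))
  rw [hmod, zero_add] at this
  exact this

lemma posetChi_eq_zero {S : Finset P} {σ : P → ℕ} {x y : P} (hx : x ∉ S) :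
    posetChi S σ x y = 0 := by
  unfold posetChi
  refine Finset.sum_eq_zero fun z hz => ?_
  have hz1 := (Finset.mem_inter.mp hz).1
  have hxz : x ≠ z := fun h => hx (h ▸ hz1)
  rw [posetMu_eq_zero_of_not_mem S x hx z hxz]
  simp

lemma posetChibar_eq_zero {S : Finset P} {σ : P → ℕ} {x y : P} (hx : x ∉ S) (hne : x ≠ y) :
    posetChibar S σ x y = 0 := by
  unfold posetChibar
  rw [if_neg hne, posetChi_eq_zero hx, Polynomial.zero_divByMonic]

lemma posetChow_eq_zero {S : Finset P} {σ : P → ℕ} {x y : P} (hx : x ∉ S) (hne : x ≠ y) :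
    posetChow S σ x y = 0 := by
  rw [posetChow_of_ne S σ hne]
  refine Finset.sum_eq_zero fun z hz => ?_
  have hz2 := Finset.mem_Ioc.mp (Finset.mem_inter.mp hz).2
  rw [posetChibar_eq_zero hx hz2.1.ne, zero_mul]

lemma posetChow_congr {S T : Finset P} {σ σ' : P → ℕ} (x y : P)
    (h : S ∩ Finset.Icc x y = T ∩ Finset.Icc x y)
    (hσ : ∀ z ∈ S ∩ Finset.Icc x y, σ z = σ' z) (hσy : σ y = σ' y) :
    posetChow S σ x y = posetChow T σ' x y := by
  rcases eq_or_ne x y with rfl | hne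
  · rw [posetChow_self, posetChow_self]
  · rw [posetChow_of_ne S σ hne, posetChow_of_ne T σ' hne]
    have hIoc : S ∩ Finset.Ioc x y = T ∩ Finset.Ioc x y := by
      rw [inter_Ioc_eq_filter, inter_Ioc_eq_filter, h]
    rw [← hIoc]
    refine Finset.sum_congr rfl fun z hz => ?_
    have hz2 := Finset.mem_Ioc.mp (Finset.mem_inter.mp hz).2
    have hzIcc : z ∈ S ∩ Finset.Icc x y :=
      Finset.mem_inter.mpr ⟨(Finset.mem_inter.mp hz).1, Finset.mem_Icc.mpr ⟨hz2.1.le, hz2.2⟩⟩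
    have hbar : posetChibar S σ x z = posetChibar T σ' x z := by
      unfold posetChibar
      rw [if_neg (fun hh => hz2.1.ne' hh.symm), if_neg (fun hh => hz2.1.ne' hh.symm)]
      rw [posetChi_congr (inter_sub_congr h le_rfl hz2.2)
        (fun w hw => hσ w (Finset.mem_of_subset ?_ hw)) (hσ z hzIcc)]
      intro w hw
      have := Finset.mem_inter.mp hw
      exact Finset.mem_inter.mpr ⟨this.1, Finset.Icc_subset_Icc le_rfl hz2.2 this.2⟩
    rw [hbar]
    have hrec : posetChow S σ z y = posetChow T σ' z y := by
      refine posetChow_congr z y (inter_sub_congr h hz2.1.le le_rfl) ?_ hσy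
      intro w hw
      have := Finset.mem_inter.mp hw
      refine hσ w (Finset.mem_inter.mpr ⟨this.1, Finset.Icc_subset_Icc hz2.1.le le_rfl this.2⟩)
    rw [hrec]
termination_by (Finset.Icc x y).card
decreasing_by
  exact card_Icc_lt_of_mem_Ioc (Finset.mem_inter.mp hz).2

lemma inter_Icc_insert_left (S : Finset P) {x y : P} (hx : x ∈ S) (hxy : x ≤ y) :
    S ∩ Finset.Icc x y = insert x (S ∩ Finset.Ioc x y) := by
  ext w
  simp only [Finset.mem_inter, Finset.mem_insert, Finset.mem_Icc, Finset.mem_Ioc]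
  constructor
  · rintro ⟨hw, h1, h2⟩
    rcases eq_or_ne w x with rfl | hwx
    · exact Or.inl rfl
    · exact Or.inr ⟨hw, lt_of_le_of_ne h1 (Ne.symm hwx), h2⟩
  · rintro (rfl | ⟨hw, h1, h2⟩)
    · exact ⟨hx, le_rfl, hxy⟩
    · exact ⟨hw, h1.le, h2⟩

lemma not_mem_inter_Ioc (S : Finset P) (x y : P) : x ∉ S ∩ Finset.Ioc x y := by
  simp [Finset.mem_Ioc]

lemma sum_interval_swap_Ioc {M : Type*} [AddCommMonoid M] (S : Finset P) (x y : P)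
    (f : P → P → M) :
    ∑ z ∈ S ∩ Finset.Ioc x y, ∑ w ∈ S ∩ Finset.Ioc x z, f w z
      = ∑ w ∈ S ∩ Finset.Ioc x y, ∑ z ∈ S ∩ Finset.Icc w y, f w z := by
  have h1 : ∀ z ∈ S ∩ Finset.Ioc x y,
      ∑ w ∈ S ∩ Finset.Ioc x z, f w z
        = ∑ w ∈ S ∩ Finset.Ioc x y, if w ≤ z then f w z else 0 := by
    intro z hz
    have hz2 := Finset.mem_Ioc.mp (Finset.mem_inter.mp hz).2
    rw [← Finset.sum_filter]
    congr 1
    ext w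
    simp only [Finset.mem_inter, Finset.mem_filter, Finset.mem_Ioc]
    constructor
    · rintro ⟨hw, h1, h2⟩; exact ⟨⟨hw, h1, h2.trans hz2.2⟩, h2⟩
    · rintro ⟨⟨hw, h1, _⟩, h3⟩; exact ⟨hw, h1, h3⟩
  have h2 : ∀ w ∈ S ∩ Finset.Ioc x y,
      ∑ z ∈ S ∩ Finset.Icc w y, f w z
        = ∑ z ∈ S ∩ Finset.Ioc x y, if w ≤ z then f w z else 0 := by
    intro w hw
    have hw2 := Finset.mem_Ioc.mp (Finset.mem_inter.mp hw).2
    rw [← Finset.sum_filter]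
    congr 1
    ext z
    simp only [Finset.mem_inter, Finset.mem_filter, Finset.mem_Icc, Finset.mem_Ioc]
    constructor
    · rintro ⟨hz, h1, h2⟩; exact ⟨⟨hz, hw2.1.trans_le h1, h2⟩, h1⟩
    · rintro ⟨⟨hz, _, h2⟩, h3⟩; exact ⟨hz, h3, h2⟩
  rw [Finset.sum_congr rfl h1, Finset.sum_congr rfl h2, Finset.sum_comm]

lemma chow_chibar_sum (S : Finset P) (σ : P → ℕ) {x y : P}
    (hx : x ∈ S) (hy : y ∈ S) (hxy : x ≤ y) :
    ∑ z ∈ S ∩ Finset.Icc x y, posetChow S σ x z * posetChibar S σ z y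
      = if x = y then -1 else 0 := by
  rcases eq_or_ne x y with rfl | hne
  · rw [if_pos rfl, inter_Icc_insert_left S hx le_rfl, Finset.sum_insert
      (not_mem_inter_Ioc S x x)]
    have : S ∩ Finset.Ioc x x = ∅ := by simp
    rw [this, Finset.sum_empty, posetChow_self, one_mul, add_zero]
    unfold posetChibar
    rw [if_pos rfl]
  · rw [if_neg hne]
    have hlt : x < y := lt_of_le_of_ne hxy hne
    rw [inter_Icc_insert_left S hx hxy, Finset.sum_insert (not_mem_inter_Ioc S x y),
      posetChow_self, one_mul]
    have hexp : ∀ z ∈ S ∩ Finset.Ioc x y,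
        posetChow S σ x z * posetChibar S σ z y
          = ∑ w ∈ S ∩ Finset.Ioc x z,
              posetChibar S σ x w * (posetChow S σ w z * posetChibar S σ z y) := by
      intro z hz
      have hz2 := Finset.mem_Ioc.mp (Finset.mem_inter.mp hz).2
      rw [posetChow_of_ne S σ hz2.1.ne, Finset.sum_mul]
      refine Finset.sum_congr rfl fun w _ => ?_
      ring
    rw [Finset.sum_congr rfl hexp]
    rw [sum_interval_swap_Ioc S x y
      (fun w z => posetChibar S σ x w * (posetChow S σ w z * posetChibar S σ z y))]
    have hinner : ∀ w ∈ S ∩ Finset.Ioc x y,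
        ∑ z ∈ S ∩ Finset.Icc w y,
            posetChibar S σ x w * (posetChow S σ w z * posetChibar S σ z y)
          = posetChibar S σ x w * (if w = y then -1 else 0) := by
      intro w hw
      have hw1 := (Finset.mem_inter.mp hw).1
      have hw2 := Finset.mem_Ioc.mp (Finset.mem_inter.mp hw).2
      rw [← Finset.mul_sum, chow_chibar_sum S σ hw1 hy hw2.2]
    rw [Finset.sum_congr rfl hinner]
    have : ∀ w ∈ S ∩ Finset.Ioc x y,
        posetChibar S σ x w * (if w = y then -1 else 0)
          = if w = y then -(posetChibar S σ x y) else 0 := by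
      intro w _
      rcases eq_or_ne w y with rfl | hwy
      · rw [if_pos rfl, if_pos rfl]; ring
      · rw [if_neg hwy, if_neg hwy, mul_zero]
    rw [Finset.sum_congr rfl this, Finset.sum_ite_eq' (S ∩ Finset.Ioc x y) y
      (fun _ => -(posetChibar S σ x y)),
      if_pos (Finset.mem_inter.mpr ⟨hy, Finset.mem_Ioc.mpr ⟨hlt, le_rfl⟩⟩)]
    ring
termination_by (Finset.Icc x y).card
decreasing_by
  exact card_Icc_lt_of_mem_Ioc (Finset.mem_inter.mp hw).2

lemma posetChow_dual (S : Finset P) (σ : P → ℕ) {x y : P}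
    (hx : x ∈ S) (hy : y ∈ S) (hxy : x < y) :
    posetChow S σ x y = ∑ z ∈ S ∩ Finset.Ico x y, posetChow S σ x z * posetChibar S σ z y := by
  have hB := chow_chibar_sum S σ hx hy hxy.le
  rw [if_neg hxy.ne, inter_Icc_insert S hy hxy.le,
    Finset.sum_insert (not_mem_inter_Ico S x y)] at hB
  have hbar : posetChibar S σ y y = -1 := by unfold posetChibar; rw [if_pos rfl]
  rw [hbar] at hB
  linear_combination -hB

lemma rank_strictMono_aux (ρ : P → ℕ) (hcov : ∀ x y : P, x ⋖ y → ρ y = ρ x + 1) :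
    ∀ u v : P, u < v → ρ u < ρ v := by
  intro u v huv
  obtain ⟨w, hw, hwmin⟩ := (Finset.Ioc u v).exists_minimal
    ⟨v, Finset.mem_Ioc.mpr ⟨huv, le_rfl⟩⟩
  have hw' := Finset.mem_Ioc.mp hw
  have hcover : u ⋖ w := by
    refine ⟨hw'.1, fun c hc1 hc2 => ?_⟩
    exact hc2.not_ge (hwmin (Finset.mem_Ioc.mpr ⟨hc1, hc2.le.trans hw'.2⟩) hc2.le)
  have hρw := hcov u w hcover
  rcases eq_or_ne w v with rfl | hne
  · omega
  · have hlt : w < v := lt_of_le_of_ne hw'.2 hne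
    have := rank_strictMono_aux ρ hcov w v hlt
    omega
termination_by u v => (Finset.Icc u v).card
decreasing_by
  exact card_Icc_lt_of_mem_Ioc hw

lemma pair_chibar_mu (S : Finset P) (σ : P → ℕ) {z y : P} (hz : z ∈ S)
    (hzy : z < y) (hIcc : S ∩ Finset.Icc z y = {z, y}) (h1 : σ y = σ z + 1) :
    posetChibar S σ z y = 1 ∧ posetMu S z y = -1 := by
  have hy : y ∈ S := by
    have : y ∈ S ∩ Finset.Icc z y := by
      rw [hIcc]; simp
    exact (Finset.mem_inter.mp this).1
  have hIco : S ∩ Finset.Ico z y = {z} := by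
    rw [inter_Ico_eq_filter, hIcc]
    ext w
    simp only [Finset.mem_filter, Finset.mem_insert, Finset.mem_singleton]
    constructor
    · rintro ⟨h | h, hne⟩
      · exact h
      · exact absurd h hne
    · rintro rfl; exact ⟨Or.inl rfl, hzy.ne⟩
  have hμ : posetMu S z y = -1 := by
    rw [posetMu_of_ne S hzy.ne, hIco, Finset.sum_singleton, posetMu_self]
  have hchi : posetChi S σ z y = X - C 1 := by
    unfold posetChi
    rw [hIcc, Finset.sum_pair hzy.ne, posetMu_self, hμ]
    have e1 : σ y - σ z = 1 := by omega
    have e2 : σ y - σ y = 0 := by omega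
    rw [e1, e2, pow_one, pow_zero, mul_one]
    push_cast
    rw [map_one, map_neg, map_one]
    ring
  have hbar : posetChibar S σ z y = 1 := by
    have hm := posetChibar_mul (σ := σ) hy hzy.le hzy.ne
    rw [hchi] at hm
    have hne0 : (X - C (1:ℝ)) ≠ 0 := Polynomial.X_sub_C_ne_zero 1
    have : (X - C (1:ℝ)) * posetChibar S σ z y = (X - C 1) * 1 := by rw [hm, mul_one]
    exact mul_left_cancel₀ hne0 this
  exact ⟨hbar, hμ⟩

end Aux

section Trunc
variable [BoundedOrder P]

lemma chibar_trunc (S : Finset P) (σ : P → ℕ) {y z : P} (hy : y ∈ S) (hz : z ∈ S)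
    (hzy : z < y) (hst : ∀ u ∈ S, ∀ v ∈ S, u < v → σ u < σ v) :
    posetChibar S σ z y
      = X * posetChibar ((S ∩ Finset.Icc ⊥ y).filter (fun w => σ w ≠ σ y - 1))
          (fun w => min (σ w) (σ y - 1)) z y
        - C ((posetMu S z y : ℤ) : ℝ) := by
  set Q := (S ∩ Finset.Icc ⊥ y).filter (fun w => σ w ≠ σ y - 1) with hQdef
  set σ' : P → ℕ := fun w => min (σ w) (σ y - 1) with hσ'def
  have hσzy : σ z < σ y := hst z hz y hy hzy
  have hyQ : y ∈ Q := by
    rw [hQdef, Finset.mem_filter]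
    exact ⟨Finset.mem_inter.mpr ⟨hy, Finset.mem_Icc.mpr ⟨bot_le, le_rfl⟩⟩, by omega⟩
  have hQsubS : ∀ w, w ∈ Q → w ∈ S := fun w hw =>
    (Finset.mem_inter.mp (Finset.mem_filter.mp hw).1).1
  by_cases hcase : σ z = σ y - 1
  · have hIcc : S ∩ Finset.Icc z y = {z, y} := by
      ext w
      simp only [Finset.mem_inter, Finset.mem_Icc, Finset.mem_insert, Finset.mem_singleton]
      constructor
      · rintro ⟨hw, h1, h2⟩
        by_contra hcon
        push_neg at hcon
        have hw1 : z < w := lt_of_le_of_ne h1 (Ne.symm hcon.1)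
        have hw2 : w < y := lt_of_le_of_ne h2 hcon.2
        have e1 := hst z hz w hw hw1
        have e2 := hst w hw y hy hw2
        omega
      · rintro (rfl | rfl)
        · exact ⟨hz, le_rfl, hzy.le⟩
        · exact ⟨hy, hzy.le, le_rfl⟩
    obtain ⟨hbar, hμ⟩ := pair_chibar_mu S σ hz hzy hIcc (by omega)
    have hzQ : z ∉ Q := fun hmem => (Finset.mem_filter.mp hmem).2 hcase
    have hbarQ : posetChibar Q σ' z y = 0 := posetChibar_eq_zero hzQ hzy.ne
    rw [hbar, hbarQ, hμ]
    simp
  · have hσz2 : σ z + 2 ≤ σ y := by omega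
    have hzQ : z ∈ Q := by
      rw [hQdef, Finset.mem_filter]
      exact ⟨Finset.mem_inter.mpr ⟨hz, Finset.mem_Icc.mpr ⟨bot_le, hzy.le⟩⟩, hcase⟩
    have hwfacts : ∀ w ∈ Q ∩ Finset.Ico z y, w ∈ S ∧ σ w + 2 ≤ σ y := by
      intro w hw
      have hw1 := hQsubS w (Finset.mem_inter.mp hw).1
      have hw2 := Finset.mem_Ico.mp (Finset.mem_inter.mp hw).2
      have hwQ := (Finset.mem_filter.mp (Finset.mem_inter.mp hw).1).2
      have := hst w hw1 y hy hw2.2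
      exact ⟨hw1, by omega⟩
    have hQIco : Q ∩ Finset.Ico z y
        = (S ∩ Finset.Ico z y).filter (fun w => ¬ σ w = σ y - 1) := by
      ext w
      simp only [hQdef, Finset.mem_filter, Finset.mem_inter, Finset.mem_Icc, Finset.mem_Ico]
      constructor
      · rintro ⟨⟨⟨hw, _⟩, hσw⟩, h1, h2⟩
        exact ⟨⟨hw, h1, h2⟩, hσw⟩
      · rintro ⟨⟨hw, h1, h2⟩, hσw⟩
        exact ⟨⟨⟨hw, bot_le, h2.le⟩, hσw⟩, h1, h2⟩
    have hμeq : ∀ w ∈ Q ∩ Finset.Ico z y, posetMu Q z w = posetMu S z w := by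
      intro w hw
      have hw2 := Finset.mem_Ico.mp (Finset.mem_inter.mp hw).2
      have hwS := (hwfacts w hw).1
      have hw3 := (hwfacts w hw).2
      refine posetMu_congr Q S z w ?_
      ext u
      constructor
      · intro hu
        exact Finset.mem_inter.mpr
          ⟨hQsubS u (Finset.mem_inter.mp hu).1, (Finset.mem_inter.mp hu).2⟩
      · intro hu
        have hu1 := (Finset.mem_inter.mp hu).1
        have hu2 := Finset.mem_Ico.mp (Finset.mem_inter.mp hu).2
        refine Finset.mem_inter.mpr ⟨?_, (Finset.mem_inter.mp hu).2⟩
        rw [hQdef, Finset.mem_filter]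
        have huy : u < y := hu2.2.trans hw2.2
        refine ⟨Finset.mem_inter.mpr ⟨hu1, Finset.mem_Icc.mpr ⟨bot_le, huy.le⟩⟩, ?_⟩
        have := hst u hu1 w hwS hu2.2
        omega
    have hyIco : y ∉ Q ∩ Finset.Ico z y := not_mem_inter_Ico Q z y
    have hQsplit : Q ∩ Finset.Icc z y = insert y (Q ∩ Finset.Ico z y) :=
      inter_Icc_insert Q hyQ hzy.le
    have hSsplit : S ∩ Finset.Icc z y = insert y (S ∩ Finset.Ico z y) :=
      inter_Icc_insert S hy hzy.le
    have hmin_y : σ' y = σ y - 1 := min_eq_right (by omega)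
    have hchiQ : posetChi Q σ' z y
        = C ((posetMu Q z y : ℤ) : ℝ)
          + ∑ w ∈ Q ∩ Finset.Ico z y,
              C ((posetMu S z w : ℤ) : ℝ) * X ^ (σ y - 1 - σ w) := by
      unfold posetChi
      rw [hQsplit, Finset.sum_insert hyIco]
      congr 1
      · rw [Nat.sub_self, pow_zero, mul_one]
      · refine Finset.sum_congr rfl fun w hw => ?_
        rw [hμeq w hw]
        have hw3 := (hwfacts w hw).2
        have hmin_w : σ' w = σ w := min_eq_left (by omega)
        rw [hmin_y, hmin_w]
    have hchiS : posetChi S σ z y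
        = C ((posetMu S z y : ℤ) : ℝ)
          + ((∑ w ∈ (S ∩ Finset.Ico z y).filter (fun w => σ w = σ y - 1),
              C ((posetMu S z w : ℤ) : ℝ)) * X
          + ∑ w ∈ Q ∩ Finset.Ico z y,
              C ((posetMu S z w : ℤ) : ℝ) * X ^ (σ y - σ w)) := by
      unfold posetChi
      rw [hSsplit, Finset.sum_insert (not_mem_inter_Ico S z y)]
      congr 1
      · rw [Nat.sub_self, pow_zero, mul_one]
      · rw [← Finset.sum_filter_add_sum_filter_not (S ∩ Finset.Ico z y)
          (fun w => σ w = σ y - 1)]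
        congr 1
        · rw [Finset.sum_mul]
          refine Finset.sum_congr rfl fun w hw => ?_
          have hw1 := Finset.mem_filter.mp hw
          have : σ y - σ w = 1 := by
            have := hw1.2
            omega
          rw [this, pow_one]
        · rw [hQIco]
    have hμQy : (posetMu Q z y : ℤ)
        = posetMu S z y
          + ∑ w ∈ (S ∩ Finset.Ico z y).filter (fun w => σ w = σ y - 1), posetMu S z w := by
      rw [posetMu_of_ne Q hzy.ne, posetMu_of_ne S hzy.ne]
      rw [Finset.sum_congr rfl hμeq]
      have htot := Finset.sum_filter_add_sum_filter_not (S ∩ Finset.Ico z y)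
        (fun w => σ w = σ y - 1) (fun w => posetMu S z w)
      rw [hQIco]
      linarith [htot]
    have hkey : X * posetChi Q σ' z y
        = posetChi S σ z y + (X - C 1) * C ((posetMu S z y : ℤ) : ℝ) := by
      rw [hchiQ, hchiS, hμQy]
      rw [mul_add, Finset.mul_sum]
      have hterm : ∀ w ∈ Q ∩ Finset.Ico z y,
          X * (C ((posetMu S z w : ℤ) : ℝ) * X ^ (σ y - 1 - σ w))
            = C ((posetMu S z w : ℤ) : ℝ) * X ^ (σ y - σ w) := by
        intro w hw
        have hw3 := (hwfacts w hw).2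
        have hexp : σ y - σ w = (σ y - 1 - σ w) + 1 := by omega
        rw [hexp, pow_succ]
        ring
      rw [Finset.sum_congr rfl hterm]
      rw [Int.cast_add, Int.cast_sum, map_add, map_sum]
      have hcomm : ∑ x ∈ Q ∩ Finset.Ico z y, X ^ (σ y - σ x) * C ((posetMu S z x : ℤ) : ℝ)
          = ∑ w ∈ Q ∩ Finset.Ico z y, C ((posetMu S z w : ℤ) : ℝ) * X ^ (σ y - σ w) :=
        Finset.sum_congr rfl fun w _ => mul_comm _ _
      rw [map_one]
      ring_nf
    have hbarS := posetChibar_mul (S := S) (σ := σ) hy hzy.le hzy.ne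
    have hbarQ := posetChibar_mul (S := Q) (σ := σ') hyQ hzy.le hzy.ne
    have hc : (X - C (1:ℝ)) * (X * posetChibar Q σ' z y - C ((posetMu S z y : ℤ) : ℝ))
        = (X - C 1) * posetChibar S σ z y := by
      have h1 : (X - C (1:ℝ)) * (X * posetChibar Q σ' z y)
          = X * ((X - C 1) * posetChibar Q σ' z y) := by ring
      rw [mul_sub, h1, hbarQ, hkey, hbarS]
      ring
    exact (mul_left_cancel₀ (Polynomial.X_sub_C_ne_zero 1) hc).symm

end Trunc


lemma inter_Ioc_insert (S : Finset P) {x y : P} (hy : y ∈ S) (hxy : x < y) :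
    S ∩ Finset.Ioc x y = insert y (S ∩ Finset.Ioo x y) := by
  ext w
  simp only [Finset.mem_inter, Finset.mem_insert, Finset.mem_Ioc, Finset.mem_Ioo]
  constructor
  · rintro ⟨hw, h1, h2⟩
    rcases eq_or_ne w y with rfl | hwy
    · exact Or.inl rfl
    · exact Or.inr ⟨hw, h1, lt_of_le_of_ne h2 hwy⟩
  · rintro (rfl | ⟨hw, h1, h2⟩)
    · exact ⟨hy, hxy, le_rfl⟩
    · exact ⟨hw, h1, h2.le⟩

lemma not_mem_inter_Ioo (S : Finset P) (x y : P) : y ∉ S ∩ Finset.Ioo x y := by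
  simp [Finset.mem_Ioo]

lemma sum_interval_swap_Ico {M : Type*} [AddCommMonoid M] (S : Finset P) (x0 y : P)
    (f : P → P → M) :
    ∑ z ∈ S ∩ Finset.Ico x0 y, ∑ x ∈ S ∩ Finset.Ioc x0 z, f x z
      = ∑ x ∈ S ∩ Finset.Ioo x0 y, ∑ z ∈ S ∩ Finset.Ico x y, f x z := by
  have h1 : ∀ z ∈ S ∩ Finset.Ico x0 y,
      ∑ x ∈ S ∩ Finset.Ioc x0 z, f x z
        = ∑ x ∈ S ∩ Finset.Ioo x0 y, if x ≤ z then f x z else 0 := by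
    intro z hz
    have hz2 := Finset.mem_Ico.mp (Finset.mem_inter.mp hz).2
    rw [← Finset.sum_filter]
    congr 1
    ext x
    simp only [Finset.mem_inter, Finset.mem_filter, Finset.mem_Ioc, Finset.mem_Ioo]
    constructor
    · rintro ⟨hx, h1, h2⟩; exact ⟨⟨hx, h1, lt_of_le_of_lt h2 hz2.2⟩, h2⟩
    · rintro ⟨⟨hx, h1, _⟩, h3⟩; exact ⟨hx, h1, h3⟩
  have h2 : ∀ x ∈ S ∩ Finset.Ioo x0 y,
      ∑ z ∈ S ∩ Finset.Ico x y, f x z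
        = ∑ z ∈ S ∩ Finset.Ico x0 y, if x ≤ z then f x z else 0 := by
    intro x hx
    have hx2 := Finset.mem_Ioo.mp (Finset.mem_inter.mp hx).2
    rw [← Finset.sum_filter]
    congr 1
    ext z
    simp only [Finset.mem_inter, Finset.mem_filter, Finset.mem_Ico]
    constructor
    · rintro ⟨hz, h1, h2⟩; exact ⟨⟨hz, hx2.1.le.trans h1, h2⟩, h1⟩
    · rintro ⟨⟨hz, _, h2⟩, h3⟩; exact ⟨hz, h3, h2⟩
  rw [Finset.sum_congr rfl h1, Finset.sum_congr rfl h2, Finset.sum_comm]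

lemma col_sum_Ico_C (S : Finset P) {x y : P} (hx : x ∈ S) (hy : y ∈ S) (hxy : x < y) :
    ∑ z ∈ S ∩ Finset.Ico x y, C ((posetMu S z y : ℤ) : ℝ) = -1 := by
  have hcol := posetMu_col_sum S hx hy hxy.le
  rw [if_neg hxy.ne, inter_Icc_insert S hy hxy.le,
    Finset.sum_insert (not_mem_inter_Ico S x y), posetMu_self] at hcol
  have hz : ∑ z ∈ S ∩ Finset.Ico x y, posetMu S z y = -1 := by omega
  have : ∑ z ∈ S ∩ Finset.Ico x y, C ((posetMu S z y : ℤ) : ℝ)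
      = C (((∑ z ∈ S ∩ Finset.Ico x y, posetMu S z y : ℤ)) : ℝ) := by
    rw [Int.cast_sum, map_sum]
  rw [this, hz]
  norm_num

theorem trunc_formula [BoundedOrder P] (S : Finset P) (σ : P → ℕ)
    (hbS : ⊥ ∈ S) (hσb : σ ⊥ = 0)
    (hst : ∀ u ∈ S, ∀ v ∈ S, u < v → σ u < σ v)
    (y : P) (hy : y ∈ S) :
    posetChow S σ ⊥ y = 1 + X * ∑ x ∈ S ∩ Finset.Ioc ⊥ y,
      posetChow ((S ∩ Finset.Icc ⊥ x).filter (fun w => σ w ≠ σ x - 1))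
        (fun w => min (σ w) (σ x - 1)) ⊥ x := by
  rcases eq_or_ne ⊥ y with rfl | hne
  · rw [posetChow_self]
    have : S ∩ Finset.Ioc (⊥:P) ⊥ = ∅ := by simp
    rw [this, Finset.sum_empty, mul_zero, add_zero]
  have hlt : (⊥:P) < y := lt_of_le_of_ne bot_le hne
  have hσy1 : 1 ≤ σ y := by have := hst ⊥ hbS y hy hlt; omega
  by_cases hcase1 : σ y = 1
  · -- rank-one case
    have hIco : S ∩ Finset.Ico ⊥ y = {⊥} := by
      ext w
      simp only [Finset.mem_inter, Finset.mem_Ico, Finset.mem_singleton]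
      constructor
      · rintro ⟨hw, _, h2⟩
        by_contra hwne
        have : (⊥:P) < w := lt_of_le_of_ne bot_le (Ne.symm hwne)
        have e1 := hst ⊥ hbS w hw this
        have e2 := hst w hw y hy h2
        omega
      · rintro rfl; exact ⟨hbS, bot_le, hlt⟩
    have hIcc : S ∩ Finset.Icc ⊥ y = {⊥, y} := by
      rw [inter_Icc_insert S hy bot_le, hIco]
      rw [Finset.pair_comm]
    obtain ⟨hbar, _⟩ := pair_chibar_mu S σ hbS hlt hIcc (by omega)
    have hIoc : S ∩ Finset.Ioc ⊥ y = {y} := by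
      rw [inter_Ioc_eq_filter, hIcc]
      ext w
      simp only [Finset.mem_filter, Finset.mem_insert, Finset.mem_singleton]
      constructor
      · rintro ⟨h | h, hne2⟩
        · exact absurd h hne2
        · exact h
      · rintro rfl; exact ⟨Or.inr rfl, Ne.symm hne⟩
    rw [posetChow_of_ne S σ hne, hIoc, Finset.sum_singleton, hbar, posetChow_self,
      one_mul, Finset.sum_singleton]
    have hHτ : posetChow ((S ∩ Finset.Icc ⊥ y).filter (fun w => σ w ≠ σ y - 1))
        (fun w => min (σ w) (σ y - 1)) ⊥ y = 0 := by
      refine posetChow_eq_zero ?_ hne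
      rw [Finset.mem_filter]
      push_neg
      intro _
      omega
    rw [hHτ]
    ring
  · -- main case : σ y ≥ 2
    have hσy2 : 2 ≤ σ y := by omega
    set Q := (S ∩ Finset.Icc ⊥ y).filter (fun w => σ w ≠ σ y - 1) with hQdef
    set σ' : P → ℕ := fun w => min (σ w) (σ y - 1) with hσ'def
    have hbQ : ⊥ ∈ Q := by
      rw [hQdef, Finset.mem_filter]
      refine ⟨Finset.mem_inter.mpr ⟨hbS, Finset.mem_Icc.mpr ⟨le_rfl, bot_le⟩⟩, by omega⟩
    have hyQ : y ∈ Q := by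
      rw [hQdef, Finset.mem_filter]
      exact ⟨Finset.mem_inter.mpr ⟨hy, Finset.mem_Icc.mpr ⟨bot_le, le_rfl⟩⟩, by omega⟩
    have hQsubS : ∀ w, w ∈ Q → w ∈ S := fun w hw =>
      (Finset.mem_inter.mp (Finset.mem_filter.mp hw).1).1
    have hdual := posetChow_dual S σ hbS hy hlt
    have hIH : ∀ z ∈ S ∩ Finset.Ico ⊥ y,
        posetChow S σ ⊥ z = 1 + X * ∑ x ∈ S ∩ Finset.Ioc ⊥ z,
          posetChow ((S ∩ Finset.Icc ⊥ x).filter (fun w => σ w ≠ σ x - 1))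
            (fun w => min (σ w) (σ x - 1)) ⊥ x := by
      intro z hz
      exact trunc_formula S σ hbS hσb hst z (Finset.mem_inter.mp hz).1
    have hsub : ∀ z ∈ S ∩ Finset.Ico ⊥ y,
        posetChow S σ ⊥ z * posetChibar S σ z y
          = X * (posetChow S σ ⊥ z * posetChibar Q σ' z y)
            - posetChow S σ ⊥ z * C ((posetMu S z y : ℤ) : ℝ) := by
      intro z hz
      have hz1 := (Finset.mem_inter.mp hz).1
      have hz2 := Finset.mem_Ico.mp (Finset.mem_inter.mp hz).2
      rw [chibar_trunc S σ hy hz1 hz2.2 hst]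
      ring
    rw [hdual, Finset.sum_congr rfl hsub, Finset.sum_sub_distrib, ← Finset.mul_sum]
    -- first piece : X * Hτ(y)
    have hpart1 : ∑ z ∈ S ∩ Finset.Ico ⊥ y, posetChow S σ ⊥ z * posetChibar Q σ' z y
        = posetChow Q σ' ⊥ y := by
      rw [posetChow_dual Q σ' hbQ hyQ hlt]
      have hQsubIco : Q ∩ Finset.Ico ⊥ y ⊆ S ∩ Finset.Ico ⊥ y := by
        intro w hw
        exact Finset.mem_inter.mpr ⟨hQsubS w (Finset.mem_inter.mp hw).1,
          (Finset.mem_inter.mp hw).2⟩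
      rw [← Finset.sum_subset hQsubIco ?hvanish]
      case hvanish =>
        intro z hz hznot
        have : z ∉ Q := fun hq => hznot (Finset.mem_inter.mpr ⟨hq, (Finset.mem_inter.mp hz).2⟩)
        have hz2 := Finset.mem_Ico.mp (Finset.mem_inter.mp hz).2
        rw [posetChibar_eq_zero this hz2.2.ne, mul_zero]
      refine Finset.sum_congr rfl fun z hz => ?_
      have hz2 := Finset.mem_Ico.mp (Finset.mem_inter.mp hz).2
      have hzQ := (Finset.mem_inter.mp hz).1
      have hzS := hQsubS z hzQ
      have hσz : σ z + 2 ≤ σ y := by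
        have h3 := (Finset.mem_filter.mp hzQ).2
        rcases eq_or_ne z ⊥ with rfl | hzb
        · omega
        · have := hst z hzS y hy hz2.2
          omega
      have hset : S ∩ Finset.Icc ⊥ z = Q ∩ Finset.Icc ⊥ z := by
        ext u
        constructor
        · intro hu
          have hu1 := (Finset.mem_inter.mp hu).1
          have hu2 := Finset.mem_Icc.mp (Finset.mem_inter.mp hu).2
          refine Finset.mem_inter.mpr ⟨?_, (Finset.mem_inter.mp hu).2⟩
          rw [hQdef, Finset.mem_filter]
          refine ⟨Finset.mem_inter.mpr ⟨hu1, Finset.mem_Icc.mpr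
            ⟨bot_le, hu2.2.trans hz2.2.le⟩⟩, ?_⟩
          rcases eq_or_ne u z with rfl | hune
          · omega
          · have := hst u hu1 z hzS (lt_of_le_of_ne hu2.2 hune)
            omega
        · intro hu
          exact Finset.mem_inter.mpr ⟨hQsubS u (Finset.mem_inter.mp hu).1,
            (Finset.mem_inter.mp hu).2⟩
      have hσeq : ∀ u ∈ S ∩ Finset.Icc ⊥ z, σ u = σ' u := by
        intro u hu
        have hu1 := (Finset.mem_inter.mp hu).1
        have hu2 := Finset.mem_Icc.mp (Finset.mem_inter.mp hu).2
        have : σ u ≤ σ z := by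
          rcases eq_or_ne u z with rfl | hune
          · exact le_rfl
          · exact (hst u hu1 z hzS (lt_of_le_of_ne hu2.2 hune)).le
        simp only [hσ'def]
        omega
      rw [posetChow_congr ⊥ z hset hσeq (hσeq z (Finset.mem_inter.mpr
        ⟨hzS, Finset.mem_Icc.mpr ⟨bot_le, le_rfl⟩⟩))]
    -- second piece
    have hpart2 : ∑ z ∈ S ∩ Finset.Ico ⊥ y, posetChow S σ ⊥ z * C ((posetMu S z y : ℤ) : ℝ)
        = -1 - X * ∑ x ∈ S ∩ Finset.Ioo ⊥ y,
            posetChow ((S ∩ Finset.Icc ⊥ x).filter (fun w => σ w ≠ σ x - 1))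
              (fun w => min (σ w) (σ x - 1)) ⊥ x := by
      have hexp : ∀ z ∈ S ∩ Finset.Ico ⊥ y,
          posetChow S σ ⊥ z * C ((posetMu S z y : ℤ) : ℝ)
            = C ((posetMu S z y : ℤ) : ℝ)
              + X * ∑ x ∈ S ∩ Finset.Ioc ⊥ z,
                  posetChow ((S ∩ Finset.Icc ⊥ x).filter (fun w => σ w ≠ σ x - 1))
                    (fun w => min (σ w) (σ x - 1)) ⊥ x * C ((posetMu S z y : ℤ) : ℝ) := by
        intro z hz
        rw [hIH z hz, ← Finset.sum_mul]
        ring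
      rw [Finset.sum_congr rfl hexp, Finset.sum_add_distrib, ← Finset.mul_sum]
      rw [col_sum_Ico_C S hbS hy hlt]
      rw [sum_interval_swap_Ico S ⊥ y (fun x z =>
        posetChow ((S ∩ Finset.Icc ⊥ x).filter (fun w => σ w ≠ σ x - 1))
          (fun w => min (σ w) (σ x - 1)) ⊥ x * C ((posetMu S z y : ℤ) : ℝ))]
      have hinner : ∀ x ∈ S ∩ Finset.Ioo ⊥ y,
          ∑ z ∈ S ∩ Finset.Ico x y,
            posetChow ((S ∩ Finset.Icc ⊥ x).filter (fun w => σ w ≠ σ x - 1))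
              (fun w => min (σ w) (σ x - 1)) ⊥ x * C ((posetMu S z y : ℤ) : ℝ)
            = - posetChow ((S ∩ Finset.Icc ⊥ x).filter (fun w => σ w ≠ σ x - 1))
                (fun w => min (σ w) (σ x - 1)) ⊥ x := by
        intro x hx
        have hx1 := (Finset.mem_inter.mp hx).1
        have hx2 := Finset.mem_Ioo.mp (Finset.mem_inter.mp hx).2
        rw [← Finset.mul_sum, col_sum_Ico_C S hx1 hy hx2.2]
        ring
      rw [Finset.sum_congr rfl hinner, Finset.sum_neg_distrib]
      ring
    rw [hpart1, hpart2]
    have hIocIns : S ∩ Finset.Ioc ⊥ y = insert y (S ∩ Finset.Ioo ⊥ y) :=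
      inter_Ioc_insert S hy hlt
    rw [hIocIns, Finset.sum_insert (not_mem_inter_Ioo S ⊥ y)]
    rw [← hQdef, ← hσ'def]
    ring
termination_by (Finset.Icc (⊥:P) y).card
decreasing_by
  exact card_Icc_lt_of_mem_Ico (Finset.mem_inter.mp hz).2

/-- For a finite bounded graded poset `P` of rank `r ≥ 2`,
`H_P = (1+t)·H_{τ(P)} - t·H_{τ²(P)} + t·∑_{ρ(x)=r-1} H_{τ([0̂,x])}`. -/
theorem chow_double_truncation_formula
    {P : Type*} [PartialOrder P] [Fintype P] [BoundedOrder P]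
    (ρ : P → ℕ) (hρ : IsRankFn ρ) (r : ℕ) (hr : ρ (⊤ : P) = r) (h2 : 2 ≤ r) :
    posetChow (Finset.univ : Finset P) ρ ⊥ ⊤ =
      (1 + X) * posetChow (Finset.univ.filter (fun z : P => ρ z ≠ r - 1))
          (fun z => min (ρ z) (r - 1)) ⊥ ⊤
        - X * posetChow (Finset.univ.filter (fun z : P => ρ z ≠ r - 1 ∧ ρ z ≠ r - 2))
            (fun z => min (ρ z) (r - 2)) ⊥ ⊤
        + X * ∑ x ∈ Finset.univ.filter (fun x : P => ρ x = r - 1),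
            posetChow ((Finset.Icc ⊥ x).filter (fun z => ρ z ≠ ρ x - 1))
              (fun z => min (ρ z) (ρ x - 1)) ⊥ x := by
  obtain ⟨hρ0, hρcov⟩ := hρ
  have hst : ∀ u v : P, u < v → ρ u < ρ v := rank_strictMono_aux ρ hρcov
  have hIccU : Finset.Icc (⊥:P) ⊤ = Finset.univ := by
    ext u; simp [Finset.mem_Icc, bot_le, le_top]
  have hbt : (⊥:P) ≠ ⊤ := by
    intro h
    rw [h, hr] at hρ0
    omega
  have hltT : (⊥:P) < ⊤ := lt_of_le_of_ne bot_le hbt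
  have hlt_top_rank : ∀ u : P, u ≠ ⊤ → ρ u < r := by
    intro u hu
    have := hst u ⊤ (lt_of_le_of_ne le_top hu)
    omega
  -- the truncation formula for P itself
  have e1 := trunc_formula Finset.univ ρ (Finset.mem_univ _) hρ0
    (fun u _ v _ huv => hst u v huv) ⊤ (Finset.mem_univ _)
  simp only [Finset.univ_inter] at e1
  have hIocIns : Finset.Ioc (⊥:P) ⊤ = insert ⊤ (Finset.Ioo (⊥:P) ⊤) := by
    ext u
    simp only [Finset.mem_Ioc, Finset.mem_insert, Finset.mem_Ioo]
    constructor
    · rintro ⟨h1, h2⟩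
      rcases eq_or_ne u ⊤ with rfl | hne
      · exact Or.inl rfl
      · exact Or.inr ⟨h1, lt_of_le_of_ne h2 hne⟩
    · rintro (rfl | ⟨h1, h2⟩)
      · exact ⟨hltT, le_rfl⟩
      · exact ⟨h1, h2.le⟩
  have htopIoo : (⊤:P) ∉ Finset.Ioo (⊥:P) ⊤ := by simp
  rw [hIocIns, Finset.sum_insert htopIoo,
    ← Finset.sum_filter_add_sum_filter_not (Finset.Ioo (⊥:P) ⊤) (fun x => ρ x = r - 1)] at e1
  have hB1 : (Finset.Ioo (⊥:P) ⊤).filter (fun x => ρ x = r - 1)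
      = Finset.univ.filter (fun x : P => ρ x = r - 1) := by
    ext u
    simp only [Finset.mem_filter, Finset.mem_Ioo, Finset.mem_univ, true_and]
    constructor
    · rintro ⟨_, h⟩; exact h
    · intro h
      have hub : u ≠ ⊥ := by
        intro hh
        rw [hh, hρ0] at h
        omega
      have hut : u ≠ ⊤ := by
        intro hh
        rw [hh, hr] at h
        omega
      exact ⟨⟨lt_of_le_of_ne bot_le (Ne.symm hub), lt_of_le_of_ne le_top hut⟩, h⟩
  rw [hB1, hr, hIccU] at e1
  -- the truncation formula for the truncation τP
  have hb1 : ⊥ ∈ Finset.univ.filter (fun z : P => ρ z ≠ r - 1) := by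
    rw [Finset.mem_filter]
    refine ⟨Finset.mem_univ _, ?_⟩
    rw [hρ0]; omega
  have ht1 : ⊤ ∈ Finset.univ.filter (fun z : P => ρ z ≠ r - 1) := by
    rw [Finset.mem_filter]
    refine ⟨Finset.mem_univ _, ?_⟩
    rw [hr]; omega
  have h01 : min (ρ (⊥:P)) (r-1) = 0 := by rw [hρ0]; omega
  have hst1 : ∀ u ∈ Finset.univ.filter (fun z : P => ρ z ≠ r - 1),
      ∀ v ∈ Finset.univ.filter (fun z : P => ρ z ≠ r - 1),
      u < v → min (ρ u) (r-1) < min (ρ v) (r-1) := by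
    intro u hu v hv huv
    have h1 := (Finset.mem_filter.mp hu).2
    have h2 := (Finset.mem_filter.mp hv).2
    have h3 := hst u v huv
    have h4 : ρ u < r := hlt_top_rank u (by
      intro hh
      rw [hh] at huv
      exact lt_irrefl _ (lt_of_lt_of_le huv le_top))
    rcases eq_or_ne v ⊤ with rfl | hvt
    · rw [hr]
      omega
    · have h5 := hlt_top_rank v hvt
      omega
  have e2 := trunc_formula (Finset.univ.filter (fun z : P => ρ z ≠ r - 1))
    (fun z => min (ρ z) (r-1)) hb1 h01 hst1 ⊤ ht1
  have hsplit2 : Finset.univ.filter (fun z : P => ρ z ≠ r - 1) ∩ Finset.Ioc (⊥:P) ⊤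
      = insert ⊤ ((Finset.Ioo (⊥:P) ⊤).filter (fun x => ¬ρ x = r - 1)) := by
    ext u
    simp only [Finset.mem_inter, Finset.mem_filter, Finset.mem_univ, true_and,
      Finset.mem_Ioc, Finset.mem_insert, Finset.mem_Ioo]
    constructor
    · rintro ⟨h1, h2, h3⟩
      rcases eq_or_ne u ⊤ with rfl | hne
      · exact Or.inl rfl
      · exact Or.inr ⟨⟨h2, lt_of_le_of_ne h3 hne⟩, h1⟩
    · rintro (rfl | ⟨⟨h2, h3⟩, h1⟩)
      · refine ⟨?_, hltT, le_rfl⟩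
        rw [hr]; omega
      · exact ⟨h1, h2, h3.le⟩
  have htopB2 : (⊤:P) ∉ (Finset.Ioo (⊥:P) ⊤).filter (fun x => ¬ρ x = r - 1) := by
    simp
  rw [hsplit2, Finset.sum_insert htopB2] at e2
  -- identify the top term of e2 with the double truncation
  have hM2set : (Finset.univ.filter (fun z : P => ρ z ≠ r - 1) ∩ Finset.Icc ⊥ ⊤).filter
        (fun w => (fun z => min (ρ z) (r-1)) w ≠ (fun z => min (ρ z) (r-1)) ⊤ - 1)
      = Finset.univ.filter (fun z : P => ρ z ≠ r - 1 ∧ ρ z ≠ r - 2) := by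
    rw [hIccU, Finset.inter_univ]
    ext u
    simp only [Finset.mem_filter, Finset.mem_univ, true_and, hr]
    omega
  have hM2σ : (fun w => min ((fun z => min (ρ z) (r-1)) w) ((fun z => min (ρ z) (r-1)) ⊤ - 1))
      = fun z : P => min (ρ z) (r - 2) := by
    funext w
    simp only [hr]
    omega
  rw [hM2set, hM2σ] at e2
  -- identify the lower terms of e2 with those of e1
  have hM1 : ∀ x ∈ (Finset.Ioo (⊥:P) ⊤).filter (fun x => ¬ρ x = r - 1),
      posetChow ((Finset.univ.filter (fun z : P => ρ z ≠ r - 1) ∩ Finset.Icc ⊥ x).filter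
          (fun w => (fun z => min (ρ z) (r-1)) w ≠ (fun z => min (ρ z) (r-1)) x - 1))
        (fun w => min ((fun z => min (ρ z) (r-1)) w) ((fun z => min (ρ z) (r-1)) x - 1)) ⊥ x
      = posetChow ((Finset.Icc ⊥ x).filter (fun w => ρ w ≠ ρ x - 1))
          (fun w => min (ρ w) (ρ x - 1)) ⊥ x := by
    intro x hx
    have hx1 := Finset.mem_Ioo.mp (Finset.mem_filter.mp hx).1
    have hx2 := (Finset.mem_filter.mp hx).2
    have hxr : ρ x < r := hlt_top_rank x hx1.2.ne
    have hxρ : ρ x ≤ r - 2 := by omega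
    have hrank : ∀ u : P, u ≤ x → ρ u ≤ ρ x := by
      intro u hu
      rcases eq_or_ne u x with rfl | hne
      · exact le_rfl
      · exact (hst u x (lt_of_le_of_ne hu hne)).le
    have hset : Finset.univ.filter (fun z : P => ρ z ≠ r - 1) ∩ Finset.Icc ⊥ x
        = Finset.Icc ⊥ x := by
      refine Finset.inter_eq_right.mpr ?_
      intro u hu
      have := hrank u (Finset.mem_Icc.mp hu).2
      rw [Finset.mem_filter]
      exact ⟨Finset.mem_univ _, by omega⟩
    have hfil : (Finset.Icc ⊥ x).filter
          (fun w => (fun z => min (ρ z) (r-1)) w ≠ (fun z => min (ρ z) (r-1)) x - 1)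
        = (Finset.Icc ⊥ x).filter (fun w => ρ w ≠ ρ x - 1) := by
      ext u
      simp only [Finset.mem_filter]
      constructor
      · rintro ⟨hu, h⟩
        have := hrank u (Finset.mem_Icc.mp hu).2
        exact ⟨hu, by omega⟩
      · rintro ⟨hu, h⟩
        have := hrank u (Finset.mem_Icc.mp hu).2
        exact ⟨hu, by omega⟩
    rw [hset, hfil]
    refine posetChow_congr ⊥ x rfl ?_ ?_
    · intro u hu
      have hu1 := (Finset.mem_inter.mp hu).1
      have := hrank u (Finset.mem_Icc.mp (Finset.mem_filter.mp hu1).1).2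
      simp only
      omega
    · simp only
      omega
  rw [Finset.sum_congr rfl hM1] at e2
  linear_combination e1 - e2
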